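/- Let n ≥ 3, let V₀ : ℝⁿ → ℝ be a radial C¹ function with V₀(x) = v(|x|) and v' ≤ 0 (radially decreasing). Let c = (c₁, 0) ∈ ℝ × ℝ^{n-1}, and let f : [0,∞) → [0,∞) be nondecreasing with f(0) = 0. Then for every x = (x₁, y) with x ≠ 0, x ≠ c, x ≠ −c: −2 v'(|x|) [ f(|x+c|) (x+c)·x/(|x+c||x|) + f(|x−c|) (x−c)·x/(|x−c||x|) ] ≥ 0. -/

import Mathlib

lemma aux9 {E : Type*} [NormedAddCommGroup E] [InnerProductSpace ℝ E]
    (f : ℝ → ℝ) (hf : MonotoneOn f (Set.Ici 0))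
    (hfpos : ∀ r, 0 ≤ r → 0 ≤ f r)
    (x c : E) (hx0 : x ≠ 0) (hxc : x ≠ c) (hxc' : x ≠ -c)
    (hs : 0 ≤ (inner ℝ c x : ℝ)) :
    0 ≤ f ‖x + c‖ * ((inner ℝ (x + c) x : ℝ) / (‖x + c‖ * ‖x‖)) +
        f ‖x - c‖ * ((inner ℝ (x - c) x : ℝ) / (‖x - c‖ * ‖x‖)) := by
  set R := ‖x‖ with hR
  set a := ‖x + c‖ with ha
  set b := ‖x - c‖ with hb
  have hRpos : 0 < R := norm_pos_iff.mpr hx0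
  have hapos : 0 < a := norm_pos_iff.mpr (by
    intro h; exact hxc' (by rw [eq_neg_iff_add_eq_zero]; exact h))
  have hbpos : 0 < b := norm_pos_iff.mpr (sub_ne_zero.mpr hxc)
  set s : ℝ := inner ℝ c x with hsdef
  have hsx : (inner ℝ x c : ℝ) = s := (real_inner_comm x c).symm
  have hp : (inner ℝ (x + c) x : ℝ) = R ^ 2 + s := by
    rw [inner_add_left, real_inner_self_eq_norm_sq]
  have hq : (inner ℝ (x - c) x : ℝ) = R ^ 2 - s := by
    rw [inner_sub_left, real_inner_self_eq_norm_sq]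
  have ha2 : a ^ 2 = R ^ 2 + 2 * s + ‖c‖ ^ 2 := by
    rw [ha, norm_add_sq_real, hsx]
  have hb2 : b ^ 2 = R ^ 2 - 2 * s + ‖c‖ ^ 2 := by
    rw [hb, norm_sub_sq_real, hsx]
  have hCS : s * s ≤ (‖c‖ * ‖c‖) * (‖x‖ * ‖x‖) := by
    have := real_inner_mul_inner_self_le c x
    rwa [real_inner_self_eq_norm_mul_norm, real_inner_self_eq_norm_mul_norm] at this
  rw [hp, hq]
  by_cases hqnn : 0 ≤ R ^ 2 - s
  · have hpnn : 0 ≤ R ^ 2 + s := by positivity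
    have h1 : 0 ≤ f a := hfpos a hapos.le
    have h2 : 0 ≤ f b := hfpos b hbpos.le
    have := mul_pos hapos hRpos
    have := mul_pos hbpos hRpos
    positivity
  · push_neg at hqnn
    have hba : b ≤ a := by nlinarith
    have hfb : 0 ≤ f b := hfpos b hbpos.le
    have hfab : f b ≤ f a := hf hbpos.le hapos.le hba
    have hqa : 0 ≤ -(R ^ 2 - s) := by linarith
    have h3 : (-(R ^ 2 - s)) * a ≤ (R ^ 2 + s) * b := by
      have hid : ((R ^ 2 + s) * b) ^ 2 - ((-(R ^ 2 - s)) * a) ^ 2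
          = 4 * s * (R ^ 2 * ‖c‖ ^ 2 - s * s) := by
        have e : ((R ^ 2 + s) * b) ^ 2 - ((-(R ^ 2 - s)) * a) ^ 2
            = (R ^ 2 + s) ^ 2 * b ^ 2 - (R ^ 2 - s) ^ 2 * a ^ 2 := by ring
        rw [e, ha2, hb2]; ring
      have h4 : 0 ≤ R ^ 2 * ‖c‖ ^ 2 - s * s := by nlinarith [hCS]
      have hsq : ((-(R ^ 2 - s)) * a) ^ 2 ≤ ((R ^ 2 + s) * b) ^ 2 := by
        nlinarith [mul_nonneg hs h4]
      have hlnn : 0 ≤ (-(R ^ 2 - s)) * a := mul_nonneg hqa hapos.le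
      have hrnn : 0 ≤ (R ^ 2 + s) * b := by positivity
      nlinarith
    have key : f b * (-(R ^ 2 - s)) * a ≤ f a * (R ^ 2 + s) * b := by
      calc f b * (-(R ^ 2 - s)) * a ≤ f a * (-(R ^ 2 - s)) * a := by
            apply mul_le_mul_of_nonneg_right _ hapos.le
            exact mul_le_mul_of_nonneg_right hfab hqa
        _ = f a * ((-(R ^ 2 - s)) * a) := by ring
        _ ≤ f a * ((R ^ 2 + s) * b) := by
            exact mul_le_mul_of_nonneg_left h3 (hfb.trans hfab)
        _ = f a * (R ^ 2 + s) * b := by ring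
    have hdiv : f b * (-(R ^ 2 - s)) / (b * R) ≤ f a * (R ^ 2 + s) / (a * R) := by
      rw [div_le_div_iff₀ (by positivity) (by positivity)]
      have h := mul_le_mul_of_nonneg_right key hRpos.le
      calc f b * (-(R ^ 2 - s)) * (a * R) = f b * (-(R ^ 2 - s)) * a * R := by ring
        _ ≤ f a * (R ^ 2 + s) * b * R := h
        _ = f a * (R ^ 2 + s) * (b * R) := by ring
    have e1 : f a * ((R ^ 2 + s) / (a * R)) = f a * (R ^ 2 + s) / (a * R) := by ring
    have e2 : f b * ((R ^ 2 - s) / (b * R)) = -(f b * (-(R ^ 2 - s)) / (b * R)) := by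
      ring
    rw [e1, e2]
    linarith

/-- Cancellation Lemma: for a radially decreasing `C¹` potential `V₀(x) = v(|x|)`,
a center `c = (c₁, 0)` on the first axis, and `f : [0,∞) → [0,∞)` nondecreasing with
`f 0 = 0`, the symbol of `i[V₀, γ_{-c} + γ_c]` is pointwise nonnegative. -/
theorem stmt9 (n : ℕ) (hn : 3 ≤ n)
    (V₀ : EuclideanSpace ℝ (Fin n) → ℝ) (v v' : ℝ → ℝ)
    (hV₀ : ∀ x, V₀ x = v ‖x‖)
    (hv : ∀ r : ℝ, HasDerivAt v (v' r) r)
    (hv' : ∀ r : ℝ, 0 ≤ r → v' r ≤ 0)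
    (c : EuclideanSpace ℝ (Fin n)) (hc : ∀ i : Fin n, i ≠ ⟨0, by omega⟩ → c i = 0)
    (f : ℝ → ℝ) (hf : MonotoneOn f (Set.Ici 0))
    (hfpos : ∀ r, 0 ≤ r → 0 ≤ f r) (hf0 : f 0 = 0)
    (x : EuclideanSpace ℝ (Fin n)) (hx0 : x ≠ 0) (hxc : x ≠ c) (hxc' : x ≠ -c) :
    0 ≤ -2 * v' ‖x‖ *
        (f ‖x + c‖ * ((inner ℝ (x + c) x : ℝ) / (‖x + c‖ * ‖x‖)) +
         f ‖x - c‖ * ((inner ℝ (x - c) x : ℝ) / (‖x - c‖ * ‖x‖))) := by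
  have hB : 0 ≤ f ‖x + c‖ * ((inner ℝ (x + c) x : ℝ) / (‖x + c‖ * ‖x‖)) +
      f ‖x - c‖ * ((inner ℝ (x - c) x : ℝ) / (‖x - c‖ * ‖x‖)) := by
    rcases le_or_gt 0 (inner ℝ c x : ℝ) with h | h
    · exact aux9 f hf hfpos x c hx0 hxc hxc' h
    · have h' : (0 : ℝ) ≤ (inner ℝ (-c) x : ℝ) := by
        rw [inner_neg_left]; linarith
      have key := aux9 f hf hfpos x (-c) hx0 hxc'
        (by rw [neg_neg]; exact hxc) h'
      rw [← sub_eq_add_neg, sub_neg_eq_add] at key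
      linarith
  have hv'x : v' ‖x‖ ≤ 0 := hv' ‖x‖ (norm_nonneg x)
  have : 0 ≤ -2 * v' ‖x‖ := by linarith
  exact mul_nonneg this hB
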